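/- For every admissible tensor F on V, its Nijenhuis tensor N satisfies the following identities for all x,y,z ∈ V: N(φ²x,φy,φz) = −N(φ²x,φ²y,φ²z); N(φ²x,φ²y,φ²z) = N(φx,φy,φ²z); N(x,φ²y,φ²z) = −N(x,φy,φz); N(φ²x,φ²y,z) = N(φx,φy,z); N(ξ,φy,φz) = −N(ξ,φ²y,φ²z); N(φx,φy,ξ) = N(φ²x,φ²y,ξ). -/
import Mathlib


open scoped RealInnerProductSpace

noncomputable section

/-- An almost paracontact almost paracomplex structure compatible with the inner
product on a real inner product space `V` of dimension `2 * n + 1`. -/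
structure APAP (n : ℕ) (V : Type*) [NormedAddCommGroup V] [InnerProductSpace ℝ V] where
  phi : V →ₗ[ℝ] V
  xi : V
  eta : V →ₗ[ℝ] ℝ
  dim_eq : Module.finrank ℝ V = 2 * n + 1
  phi_xi : phi xi = 0
  phi_phi : ∀ x : V, phi (phi x) = x - eta x • xi
  eta_phi : ∀ x : V, eta (phi x) = 0
  eta_xi : eta xi = 1
  trace_phi : LinearMap.trace ℝ V phi = 0
  compat : ∀ x y : V, ⟪phi x, phi y⟫ = ⟪x, y⟫ - eta x * eta y
  inner_xi : ∀ x : V, ⟪x, xi⟫ = eta x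

variable {n : ℕ} {V : Type*} [NormedAddCommGroup V] [InnerProductSpace ℝ V]

/-- The defining symmetries of the fundamental tensor `F`. -/
def APAP.Admissible (S : APAP n V) (F : V →ₗ[ℝ] V →ₗ[ℝ] V →ₗ[ℝ] ℝ) : Prop :=
  (∀ x y z : V, F x y z = F x z y) ∧
  (∀ x y z : V, F x y z =
    -F x (S.phi y) (S.phi z) + S.eta y * F x S.xi z + S.eta z * F x y S.xi)

/-- The Nijenhuis tensor of `F`. -/
def APAP.nij (S : APAP n V) (F : V →ₗ[ℝ] V →ₗ[ℝ] V →ₗ[ℝ] ℝ) (x y z : V) : ℝ :=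
  F (S.phi x) y z - F (S.phi y) x z - F x y (S.phi z) + F y x (S.phi z)
    + S.eta z * (F x (S.phi y) S.xi - F y (S.phi x) S.xi)

/-- The associated Nijenhuis tensor of `F`. -/
def APAP.nijA (S : APAP n V) (F : V →ₗ[ℝ] V →ₗ[ℝ] V →ₗ[ℝ] ℝ) (x y z : V) : ℝ :=
  F (S.phi x) y z + F (S.phi y) x z - F x y (S.phi z) - F y x (S.phi z)
    + S.eta z * (F x (S.phi y) S.xi + F y (S.phi x) S.xi)

set_option maxHeartbeats 2000000

/-- properties of the Nijenhuis tensor. -/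
theorem statement5 (hn : 1 ≤ n) (S : APAP n V) (F : V →ₗ[ℝ] V →ₗ[ℝ] V →ₗ[ℝ] ℝ)
    (hF : S.Admissible F) :
    (∀ x y z : V, S.nij F (S.phi (S.phi x)) (S.phi y) (S.phi z) =
      -S.nij F (S.phi (S.phi x)) (S.phi (S.phi y)) (S.phi (S.phi z))) ∧
    (∀ x y z : V, S.nij F (S.phi (S.phi x)) (S.phi (S.phi y)) (S.phi (S.phi z)) =
      S.nij F (S.phi x) (S.phi y) (S.phi (S.phi z))) ∧
    (∀ x y z : V, S.nij F x (S.phi (S.phi y)) (S.phi (S.phi z)) =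
      -S.nij F x (S.phi y) (S.phi z)) ∧
    (∀ x y z : V, S.nij F (S.phi (S.phi x)) (S.phi (S.phi y)) z =
      S.nij F (S.phi x) (S.phi y) z) ∧
    (∀ y z : V, S.nij F S.xi (S.phi y) (S.phi z) =
      -S.nij F S.xi (S.phi (S.phi y)) (S.phi (S.phi z))) ∧
    (∀ x y : V, S.nij F (S.phi x) (S.phi y) S.xi =
      S.nij F (S.phi (S.phi x)) (S.phi (S.phi y)) S.xi) := by
  obtain ⟨hS, hA⟩ := hF
  have hK : ∀ a b c : V, F a (S.phi b) (S.phi c) =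
      -F a b c + S.eta b * F a S.xi c + S.eta c * F a b S.xi := by
    intro a b c; linarith [hA a b c]
  have hL2 : ∀ a : V, F a S.xi S.xi = 0 := by
    intro a
    have h := hA a S.xi S.xi
    simp only [S.phi_xi, S.eta_xi, map_zero, LinearMap.zero_apply, one_mul, neg_zero,
      zero_add] at h
    linarith
  have hL5 : ∀ a b c : V, F a (S.phi b) c =
      -F a b (S.phi c) + S.eta b * F a S.xi (S.phi c) + S.eta c * F a (S.phi b) S.xi := by
    intro a b c
    have h := hK a b (S.phi c)
    simp only [S.phi_phi, S.eta_phi, map_sub, map_smul, LinearMap.sub_apply,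
      LinearMap.smul_apply, smul_eq_mul, zero_mul, add_zero] at h
    linarith
  have expand : True := trivial
  refine ⟨?_, ?_, ?_, ?_, ?_, ?_⟩
  · intro x y z
    simp only [APAP.nij, S.phi_phi, map_sub, map_smul, LinearMap.sub_apply,
      LinearMap.smul_apply, smul_eq_mul, S.eta_phi, S.phi_xi, S.eta_xi, map_zero,
      LinearMap.zero_apply, zero_mul, mul_zero, mul_one, zero_smul, smul_zero, sub_zero,
      zero_sub, add_zero, zero_add, sub_self, neg_zero]
    linear_combination (S.eta y*S.eta z) * (hL2 (S.phi x)) + ((-1)) * (hL5 x y z) + (S.eta x) * (hL5 S.xi y z) + ((1)) * (hK (S.phi x) y z)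
  · intro x y z
    simp only [APAP.nij, S.phi_phi, map_sub, map_smul, LinearMap.sub_apply,
      LinearMap.smul_apply, smul_eq_mul, S.eta_phi, S.phi_xi, S.eta_xi, map_zero,
      LinearMap.zero_apply, zero_mul, mul_zero, mul_one, zero_smul, smul_zero, sub_zero,
      zero_sub, add_zero, zero_add, sub_self, neg_zero]
    linear_combination (S.eta y*S.eta z) * (hL2 (S.phi x)) + ((-1)*S.eta x*S.eta z) * (hL2 (S.phi y)) + ((-1)) * (hL5 x y z) + ((-1)*S.eta y) * (hL5 S.xi x z) + (S.eta x) * (hL5 S.xi y z) + ((1)) * (hL5 y x z) + ((1)) * (hK (S.phi x) y z) + ((-1)) * (hK (S.phi y) x z)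
  · intro x y z
    simp only [APAP.nij, S.phi_phi, map_sub, map_smul, LinearMap.sub_apply,
      LinearMap.smul_apply, smul_eq_mul, S.eta_phi, S.phi_xi, S.eta_xi, map_zero,
      LinearMap.zero_apply, zero_mul, mul_zero, mul_one, zero_smul, smul_zero, sub_zero,
      zero_sub, add_zero, zero_add, sub_self, neg_zero]
    linear_combination (S.eta y*S.eta z) * (hL2 (S.phi x)) + ((-1)) * (hL5 x y z) + ((1)) * (hK (S.phi x) y z)
  · intro x y z
    simp only [APAP.nij, S.phi_phi, map_sub, map_smul, LinearMap.sub_apply,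
      LinearMap.smul_apply, smul_eq_mul, S.eta_phi, S.phi_xi, S.eta_xi, map_zero,
      LinearMap.zero_apply, zero_mul, mul_zero, mul_one, zero_smul, smul_zero, sub_zero,
      zero_sub, add_zero, zero_add, sub_self, neg_zero]
    linear_combination (S.eta y*S.eta z) * (hL2 (S.phi x)) + ((-1)*S.eta x*S.eta z) * (hL2 (S.phi y)) + ((-1)) * (hL5 x y z) + ((-1)*S.eta y) * (hL5 S.xi x z) + (S.eta x) * (hL5 S.xi y z) + ((1)) * (hL5 y x z) + ((1)) * (hK (S.phi x) y z) + ((-1)) * (hK (S.phi y) x z)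
  · intro y z
    simp only [APAP.nij, S.phi_phi, map_sub, map_smul, LinearMap.sub_apply,
      LinearMap.smul_apply, smul_eq_mul, S.eta_phi, S.phi_xi, S.eta_xi, map_zero,
      LinearMap.zero_apply, zero_mul, mul_zero, mul_one, zero_smul, smul_zero, sub_zero,
      zero_sub, add_zero, zero_add, sub_self, neg_zero]
    linear_combination ((-1)) * (hL5 S.xi y z)
  · intro x y
    simp only [APAP.nij, S.phi_phi, map_sub, map_smul, LinearMap.sub_apply,
      LinearMap.smul_apply, smul_eq_mul, S.eta_phi, S.phi_xi, S.eta_xi, map_zero,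
      LinearMap.zero_apply, zero_mul, mul_zero, mul_one, zero_smul, smul_zero, sub_zero,
      zero_sub, add_zero, zero_add, sub_self, neg_zero]
    ring
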